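/- arXiv:2604.12420 — 4 statements merged into one kernel-verified Lean document; each statement's English description precedes it below -/
import Mathlib

section
/- Let N be a positive natural number and let M be an N×N real symmetric positive definite matrix with trace(M) = N². Then trace(M⁻¹) = 1 if and only if M = N·I, where I is the N×N identity matrix. -/
open Matrix Finset

lemma sum_inv_eq_one_forces (N : ℕ) (hN : 0 < N) (f : Fin N → ℝ)
    (hpos : ∀ i, 0 < f i) (h1 : ∑ i, f i = (N : ℝ) ^ 2)
    (h2 : ∑ i, (f i)⁻¹ = 1) : ∀ i, f i = N := by
  have hzero : ∑ i, (f i - N) ^ 2 / f i = 0 := by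
    have hexp : ∀ i ∈ univ, (f i - N) ^ 2 / f i
        = f i - 2 * N + (N : ℝ) ^ 2 * (f i)⁻¹ := by
      intro i _
      rw [div_eq_iff (hpos i).ne']
      field_simp [(hpos i).ne']
      ring
    rw [Finset.sum_congr rfl hexp]
    simp only [Finset.sum_add_distrib, Finset.sum_sub_distrib, ← Finset.mul_sum, h1, h2,
      Finset.sum_const, card_univ, Fintype.card_fin, nsmul_eq_mul]
    ring
  intro i
  have hterm : (f i - N) ^ 2 / f i = 0 := by
    have := (Finset.sum_eq_zero_iff_of_nonneg (fun j _ =>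
      div_nonneg (sq_nonneg _) (hpos j).le)).mp hzero i (Finset.mem_univ i)
    exact this
  have := (div_eq_zero_iff.mp hterm).resolve_right (ne_of_gt (hpos i))
  have := pow_eq_zero_iff (n := 2) (by norm_num) |>.mp this
  linarith

/-- For a real symmetric positive definite `N × N` matrix `M` with `trace M = N ^ 2`,
`trace M⁻¹ = 1` iff `M = N • I`. -/
theorem trace_inv_eq_one_iff_scalar (N : ℕ) (hN : 0 < N)
    (M : Matrix (Fin N) (Fin N) ℝ)
    (hM : M.PosDef) (htr : M.trace = (N : ℝ) ^ 2) :
    M⁻¹.trace = 1 ↔ M = (N : ℝ) • (1 : Matrix (Fin N) (Fin N) ℝ) := by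
  have hH := hM.1
  set U : Matrix (Fin N) (Fin N) ℝ := (hH.eigenvectorUnitary : Matrix (Fin N) (Fin N) ℝ) with hU
  have hUU : U * star U = 1 := (Matrix.mem_unitaryGroup_iff).mp hH.eigenvectorUnitary.2
  have hUU' : star U * U = 1 := (Matrix.mem_unitaryGroup_iff').mp hH.eigenvectorUnitary.2
  set lam := hH.eigenvalues with hlam
  have hlpos : ∀ i, 0 < lam i := hM.eigenvalues_pos
  have hspec : M = U * Matrix.diagonal lam * star U := by
    simpa using hH.spectral_theorem
  -- trace of conjugated diagonal
  have htrconj : ∀ f : Fin N → ℝ, (U * Matrix.diagonal f * star U).trace = ∑ i, f i := by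
    intro f
    rw [Matrix.trace_mul_cycle, hUU', Matrix.one_mul, Matrix.trace_diagonal]
  -- inverse formula
  have hinv : M⁻¹ = U * Matrix.diagonal (fun i => (lam i)⁻¹) * star U := by
    apply Matrix.inv_eq_right_inv
    rw [hspec]
    calc U * Matrix.diagonal lam * star U * (U * Matrix.diagonal (fun i => (lam i)⁻¹) * star U)
        = U * (Matrix.diagonal lam * (star U * U) * Matrix.diagonal (fun i => (lam i)⁻¹)) * star U := by
          simp only [Matrix.mul_assoc]
      _ = U * (Matrix.diagonal lam * Matrix.diagonal (fun i => (lam i)⁻¹)) * star U := by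
          rw [hUU', Matrix.mul_one]
      _ = 1 := by
          rw [Matrix.diagonal_mul_diagonal]
          have : (fun i => lam i * (lam i)⁻¹) = fun _ => (1 : ℝ) := by
            funext i; exact mul_inv_cancel₀ (ne_of_gt (hlpos i))
          rw [this, Matrix.diagonal_one, Matrix.mul_one, hUU]
  have hsum : ∑ i, lam i = (N : ℝ) ^ 2 := by
    rw [← htr]
    conv_rhs => rw [hspec]
    rw [htrconj]
  constructor
  · intro h1
    have hsuminv : ∑ i, (lam i)⁻¹ = 1 := by
      rw [← h1, hinv, htrconj]
    have heq := sum_inv_eq_one_forces N hN lam hlpos hsum hsuminv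
    have : Matrix.diagonal lam = (N : ℝ) • (1 : Matrix (Fin N) (Fin N) ℝ) := by
      have hl : lam = fun _ => (N : ℝ) := funext heq
      rw [hl]
      ext i j
      simp [Matrix.diagonal_apply, Matrix.one_apply, mul_ite]
    rw [hspec, this]
    simp [Matrix.mul_smul, Matrix.smul_mul, hUU]
  · intro h
    have hNne : (N : ℝ) ≠ 0 := Nat.cast_ne_zero.mpr hN.ne'
    have hinv' : M⁻¹ = ((N : ℝ)⁻¹) • (1 : Matrix (Fin N) (Fin N) ℝ) := by
      apply Matrix.inv_eq_right_inv
      rw [h, Matrix.smul_mul, Matrix.mul_smul, Matrix.one_mul, smul_smul,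
        mul_inv_cancel₀ hNne, one_smul]
    rw [hinv', Matrix.trace_smul, Matrix.trace_one]
    simp [Fintype.card_fin, hNne]
end

section
/- Let N be a positive natural number and let A be an invertible N×N real matrix all of whose entries are +1 or −1. Then trace((AᵀA)⁻¹) ≥ 1, and equality holds if and only if AᵀA = N·I. -/
open Matrix

/-- Optimality of Hadamard encoding: for an invertible `±1` matrix `A`,
`trace ((Aᵀ * A)⁻¹) ≥ 1`, with equality iff `Aᵀ * A = N • I` (i.e. `A` is Hadamard). -/
theorem hadamard_optimality (N : ℕ) (hN : 0 < N)
    (A : Matrix (Fin N) (Fin N) ℝ) (hinv : IsUnit A.det)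
    (hA : ∀ i j, A i j = 1 ∨ A i j = -1) :
    1 ≤ (Aᵀ * A)⁻¹.trace ∧
      ((Aᵀ * A)⁻¹.trace = 1 ↔ Aᵀ * A = (N : ℝ) • (1 : Matrix (Fin N) (Fin N) ℝ)) := by
  classical
  have hN' : (0 : ℝ) < N := by exact_mod_cast hN
  set M : Matrix (Fin N) (Fin N) ℝ := Aᵀ * A with hMdef
  have hMH : M.IsHermitian := by
    have h := Matrix.isHermitian_conjTranspose_mul_self A
    rwa [conjTranspose_eq_transpose_of_trivial] at h
  -- positive definiteness
  have hMP : M.PosDef := by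
    refine .of_dotProduct_mulVec_pos hMH fun x hx => ?_
    have hAx : A *ᵥ x ≠ 0 := by
      intro h
      apply hx
      have h2 : A⁻¹ *ᵥ (A *ᵥ x) = x := by
        rw [mulVec_mulVec, nonsing_inv_mul A hinv, one_mulVec]
      rw [h, mulVec_zero] at h2
      exact h2.symm
    have hquad : star x ⬝ᵥ (M *ᵥ x) = (A *ᵥ x) ⬝ᵥ (A *ᵥ x) := by
      simp only [hMdef, ← mulVec_mulVec, dotProduct_mulVec, star_trivial,
        vecMul_transpose]
    rw [hquad]
    refine lt_of_le_of_ne (Finset.sum_nonneg fun j _ => mul_self_nonneg _) ?_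
    exact fun h => hAx (dotProduct_self_eq_zero.mp h.symm)
  -- eigenvalue setup
  set μ : Fin N → ℝ := hMH.eigenvalues with hμdef
  have hμpos : ∀ i, 0 < μ i := hMP.eigenvalues_pos
  set U : Matrix (Fin N) (Fin N) ℝ := (hMH.eigenvectorUnitary : Matrix (Fin N) (Fin N) ℝ)
    with hUdef
  have hUU : U * star U = 1 :=
    (Matrix.mem_unitaryGroup_iff).mp (hMH.eigenvectorUnitary).2
  have hU'U : star U * U = 1 :=
    (Matrix.mem_unitaryGroup_iff').mp (hMH.eigenvectorUnitary).2
  have hspec : M = U * diagonal μ * star U := by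
    have h := hMH.spectral_theorem
    simpa [RCLike.ofReal_real_eq_id] using h
  -- trace of M is N^2
  have hsq : ∀ i j, A i j * A i j = 1 := fun i j => by
    rcases hA i j with h | h <;> rw [h] <;> norm_num
  have htrace : M.trace = (N : ℝ) ^ 2 := by
    simp only [hMdef, Matrix.trace, Matrix.diag, Matrix.mul_apply, transpose_apply, hsq]
    simp [pow_two]
  -- sum of eigenvalues is N^2
  have hsum : ∑ i, μ i = (N : ℝ) ^ 2 := by
    have h1 : M.trace = ∑ i, μ i := by
      rw [hspec, Matrix.trace_mul_cycle, hU'U, one_mul, trace_diagonal]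
    rw [← h1, htrace]
  -- inverse of M
  have hinvM : M⁻¹ = U * diagonal (fun i => (μ i)⁻¹) * star U := by
    apply inv_eq_right_inv
    rw [hspec]
    calc U * diagonal μ * star U * (U * diagonal (fun i => (μ i)⁻¹) * star U)
        = U * (diagonal μ * (star U * U) * diagonal (fun i => (μ i)⁻¹)) * star U := by
          simp only [mul_assoc]
      _ = U * (diagonal μ * diagonal (fun i => (μ i)⁻¹)) * star U := by
          rw [hU'U, mul_one]
      _ = 1 := by
          rw [diagonal_mul_diagonal]
          have h9 : (fun i => μ i * (μ i)⁻¹) = fun _ => (1 : ℝ) := by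
            funext i; exact mul_inv_cancel₀ (hμpos i).ne'
          rw [h9, diagonal_one, mul_one, hUU]
  -- trace of the inverse
  have htrinv : M⁻¹.trace = ∑ i, (μ i)⁻¹ := by
    rw [hinvM, Matrix.trace_mul_cycle, hU'U, one_mul, trace_diagonal]
  -- key termwise inequality
  have hterm : ∀ i, (μ i)⁻¹ - (2 / (N : ℝ) - μ i / (N : ℝ) ^ 2)
      = (μ i - N) ^ 2 / ((N : ℝ) ^ 2 * μ i) := by
    intro i
    have h1 := (hμpos i).ne'
    field_simp
    ring
  have hterm' : ∀ i, 2 / (N : ℝ) - μ i / (N : ℝ) ^ 2 ≤ (μ i)⁻¹ := by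
    intro i
    have h2 : 0 ≤ (μ i - N) ^ 2 / ((N : ℝ) ^ 2 * μ i) :=
      div_nonneg (sq_nonneg _) (mul_pos (pow_pos hN' 2) (hμpos i)).le
    linarith [hterm i, h2]
  -- the lower-bound sum computation
  have hlow : ∑ i, (2 / (N : ℝ) - μ i / (N : ℝ) ^ 2) = 1 := by
    rw [Finset.sum_sub_distrib, Finset.sum_const, ← Finset.sum_div, hsum]
    simp [Finset.card_univ]
    field_simp
    norm_num
  have hineq : 1 ≤ M⁻¹.trace := by
    rw [htrinv, ← hlow]
    exact Finset.sum_le_sum fun i _ => hterm' i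
  refine ⟨hineq, ?_, ?_⟩
  · -- equality implies Hadamard
    intro heq
    have hzero : ∑ i, ((μ i)⁻¹ - (2 / (N : ℝ) - μ i / (N : ℝ) ^ 2)) = 0 := by
      rw [Finset.sum_sub_distrib, hlow, ← htrinv, heq]
      ring
    have hall : ∀ i ∈ Finset.univ, ((μ i)⁻¹ - (2 / (N : ℝ) - μ i / (N : ℝ) ^ 2)) = 0 := by
      refine (Finset.sum_eq_zero_iff_of_nonneg fun i _ => ?_).mp hzero
      linarith [hterm' i]
    have hμN : ∀ i, μ i = N := by
      intro i
      have h := hall i (Finset.mem_univ i)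
      rw [hterm i] at h
      have h3 : ((N : ℝ) ^ 2 * μ i) ≠ 0 := (mul_pos (pow_pos hN' 2) (hμpos i)).ne'
      rw [div_eq_zero_iff] at h
      rcases h with h | h
      · have h4 := pow_eq_zero_iff (n := 2) two_ne_zero |>.mp h
        linarith
      · exact absurd h h3
    have hdiag : diagonal μ = (N : ℝ) • (1 : Matrix (Fin N) (Fin N) ℝ) := by
      have : μ = fun _ => (N : ℝ) := funext hμN
      rw [this, smul_one_eq_diagonal]
    calc Aᵀ * A = M := rfl
      _ = U * diagonal μ * star U := hspec
      _ = (N : ℝ) • (U * star U) := by rw [hdiag]; simp [mul_smul_comm, smul_mul_assoc]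
      _ = (N : ℝ) • (1 : Matrix (Fin N) (Fin N) ℝ) := by rw [hUU]
  · -- Hadamard implies equality
    intro heq
    have hMN : M = (N : ℝ) • (1 : Matrix (Fin N) (Fin N) ℝ) := heq
    have hinv2 : M⁻¹ = (N : ℝ)⁻¹ • (1 : Matrix (Fin N) (Fin N) ℝ) := by
      apply inv_eq_right_inv
      rw [hMN, smul_mul_smul_comm, one_mul, mul_inv_cancel₀ hN'.ne', one_smul]
    rw [hinv2, trace_smul, trace_one]
    simp [Finset.card_univ]
    exact inv_mul_cancel₀ hN'.ne'
end

section
/- Let N be a positive natural number and let A be an invertible N×N real matrix all of whose entries are +1 or −1. Then every diagonal entry of (AᵀA)⁻¹ is at least 1/N, and if AᵀA = N·I then every diagonal entry of (AᵀA)⁻¹ equals exactly 1/N. -/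
open Matrix

/-- Per-cell form of Proposition 1: for an invertible `±1` matrix `A`, every diagonal
entry of `(Aᵀ * A)⁻¹` is at least `1 / N`, and if `Aᵀ * A = N • I` then every diagonal
entry equals exactly `1 / N`. -/
theorem hadamard_per_cell (N : ℕ) (hN : 0 < N)
    (A : Matrix (Fin N) (Fin N) ℝ) (hinv : IsUnit A.det)
    (hA : ∀ i j, A i j = 1 ∨ A i j = -1) :
    (∀ j, 1 / (N : ℝ) ≤ (Aᵀ * A)⁻¹ j j) ∧
      (Aᵀ * A = (N : ℝ) • (1 : Matrix (Fin N) (Fin N) ℝ) →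
        ∀ j, (Aᵀ * A)⁻¹ j j = 1 / (N : ℝ)) := by
  have hNpos : (0 : ℝ) < N := by exact_mod_cast hN
  constructor
  · intro j
    have hinvT : IsUnit Aᵀ.det := by rwa [Matrix.det_transpose]
    have hrw : (Aᵀ * A)⁻¹ = A⁻¹ * (A⁻¹)ᵀ := by
      rw [Matrix.mul_inv_rev, Matrix.transpose_nonsing_inv]
    have hdiag : (Aᵀ * A)⁻¹ j j = ∑ k, (A⁻¹ j k) ^ 2 := by
      rw [hrw, Matrix.mul_apply]
      simp [Matrix.transpose_apply, sq]
    have hone : (1 : ℝ) = ∑ k, A⁻¹ j k * A k j := by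
      have := Matrix.nonsing_inv_mul A hinv
      have h1 : (A⁻¹ * A) j j = 1 := by rw [this]; simp [Matrix.one_apply]
      rw [← h1, Matrix.mul_apply]
    have hcs : (∑ k, A⁻¹ j k * A k j) ^ 2 ≤
        (∑ k, (A⁻¹ j k) ^ 2) * (∑ k, (A k j) ^ 2) :=
      Finset.sum_mul_sq_le_sq_mul_sq Finset.univ _ _
    have hsq : (∑ k : Fin N, (A k j) ^ 2) = (N : ℝ) := by
      have : ∀ k : Fin N, (A k j) ^ 2 = 1 := by
        intro k; rcases hA k j with h | h <;> rw [h] <;> ring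
      simp [this]
    have key : (1 : ℝ) ≤ (∑ k, (A⁻¹ j k) ^ 2) * N := by
      calc (1 : ℝ) = (∑ k, A⁻¹ j k * A k j) ^ 2 := by rw [← hone]; ring
        _ ≤ (∑ k, (A⁻¹ j k) ^ 2) * (∑ k, (A k j) ^ 2) := hcs
        _ = (∑ k, (A⁻¹ j k) ^ 2) * N := by rw [hsq]
    rw [hdiag, div_le_iff₀ hNpos]
    linarith
  · intro h j
    have hMinv : (Aᵀ * A)⁻¹ = (1 / (N : ℝ)) • (1 : Matrix (Fin N) (Fin N) ℝ) := by
      apply Matrix.inv_eq_right_inv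
      rw [h, Matrix.smul_mul, Matrix.mul_smul, Matrix.one_mul, smul_smul]
      rw [mul_one_div, div_self hNpos.ne', one_smul]
    rw [hMinv]
    simp [Matrix.one_apply]
end

section
/- Let N be a positive natural number, let H be an N×N real matrix with all entries equal to +1 or −1 satisfying HᵀH = N·I whose first column has all entries equal to 1, let w ∈ ℝᴺ, let μ be a real number, and let (Ω, P) be a probability space carrying random variables n₁, …, n_N that are independent, each with mean 0, finite second moment, and variance σ_uc². Define the decoded estimate x̂ⱼ(ω) = (1/N)·Σᵢ H i j · (Σₖ H i k · wₖ + nᵢ(ω) + μ). Then for every index j other than the first, E[x̂ⱼ] = wⱼ and Var(x̂ⱼ) = σ_uc²/N. -/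
open Matrix MeasureTheory ProbabilityTheory

private lemma variance_const_add' {Ω : Type*} [MeasureSpace Ω]
    [IsProbabilityMeasure (ℙ : Measure Ω)] (c : ℝ) (X : Ω → ℝ)
    (hX : Integrable X ℙ) :
    variance (fun ω => c + X ω) ℙ = variance X ℙ := by
  have hmean : (∫ ω, (c + X ω) ∂ℙ) = c + ∫ ω, X ω ∂ℙ := by
    rw [integral_add (integrable_const c) hX, integral_const]
    simp
  unfold ProbabilityTheory.variance ProbabilityTheory.evariance
  congr 1
  refine lintegral_congr fun ω => ?_
  rw [hmean]
  ring_nf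

/-- Full verify-read model: measurements `ŷ i = (H w) i + n i + μ` with common-mode `μ`,
decoded by `(1/N) Hᵀ`. For every cell `j` other than the first, the decoded estimate is
unbiased (`E[x̂ j] = w j`) and has variance `σ_uc² / N`. -/
theorem hadamard_verify_unbiased_and_variance (N : ℕ) (hN : 0 < N)
    (H : Matrix (Fin N) (Fin N) ℝ)
    (hpm : ∀ i j, H i j = 1 ∨ H i j = -1)
    (hH : Hᵀ * H = (N : ℝ) • (1 : Matrix (Fin N) (Fin N) ℝ))
    (hfirst : ∀ i, H i ⟨0, hN⟩ = 1)
    (w : Fin N → ℝ) (μ : ℝ)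
    {Ω : Type*} [MeasureSpace Ω] [IsProbabilityMeasure (ℙ : Measure Ω)]
    (n : Fin N → Ω → ℝ) (σuc : ℝ)
    (hindep : iIndepFun n ℙ)
    (hmem : ∀ i, MemLp (n i) 2 ℙ)
    (hmean : ∀ i, ∫ ω, n i ω ∂ℙ = 0)
    (hvar : ∀ i, variance (n i) ℙ = σuc ^ 2) :
    ∀ j : Fin N, j ≠ ⟨0, hN⟩ →
      (∫ ω, (1 / (N : ℝ)) * ∑ i, H i j * ((∑ k, H i k * w k) + n i ω + μ) ∂ℙ = w j) ∧
      variance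
        (fun ω => (1 / (N : ℝ)) * ∑ i, H i j * ((∑ k, H i k * w k) + n i ω + μ)) ℙ
        = σuc ^ 2 / N := by
  intro j hj
  have hNne : (N : ℝ) ≠ 0 := Nat.cast_ne_zero.mpr hN.ne'
  -- Entrywise consequences of HᵀH = N • 1
  have hHT : ∀ a b : Fin N, (∑ i, H i a * H i b) = if a = b then (N : ℝ) else 0 := by
    intro a b
    have := congrFun (congrFun hH a) b
    simp only [Matrix.mul_apply, Matrix.transpose_apply, Matrix.smul_apply,
      Matrix.one_apply, smul_eq_mul] at this
    simpa [mul_ite, mul_one, mul_zero] using this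
  -- signal part
  have hsig : (∑ i, H i j * ∑ k, H i k * w k) = (N : ℝ) * w j := by
    calc (∑ i, H i j * ∑ k, H i k * w k)
        = ∑ k, (∑ i, H i j * H i k) * w k := by
          simp_rw [Finset.mul_sum]
          rw [Finset.sum_comm]
          simp_rw [Finset.sum_mul, mul_assoc]
      _ = (N : ℝ) * w j := by
          simp [hHT]
  -- common-mode column sum vanishes
  have hmu : (∑ i, H i j) = 0 := by
    have := hHT j ⟨0, hN⟩
    simp only [hfirst, mul_one, if_neg hj] at this
    exact this
  -- the decoded estimate is constant plus scaled noise
  set X : Fin N → Ω → ℝ := fun i ω => (H i j / N) * n i ω with hX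
  have hfun : ∀ ω, (1 / (N : ℝ)) * ∑ i, H i j * ((∑ k, H i k * w k) + n i ω + μ)
      = w j + ∑ i, X i ω := by
    intro ω
    have hsplit : ∑ i, H i j * ((∑ k, H i k * w k) + n i ω + μ)
        = (∑ i, H i j * ∑ k, H i k * w k) + (∑ i, H i j * n i ω) + (∑ i, H i j) * μ := by
      simp [mul_add, Finset.sum_add_distrib, Finset.sum_mul]
    rw [hsplit, hsig, hmu, zero_mul, add_zero, mul_add, Finset.mul_sum]
    simp only [hX]
    rw [one_div, inv_mul_cancel_left₀ hNne]
    congr 1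
    refine Finset.sum_congr rfl fun i _ => ?_
    ring
  have hintX : ∀ i : Fin N, Integrable (X i) ℙ :=
    fun i => ((hmem i).integrable one_le_two).const_mul _
  have hintS : Integrable (fun ω => ∑ i, X i ω) ℙ :=
    integrable_finset_sum _ fun i _ => hintX i
  constructor
  · -- unbiasedness
    simp_rw [hfun]
    rw [integral_add (integrable_const _) hintS, integral_const,
      integral_finset_sum _ fun i _ => hintX i]
    simp only [hX]
    simp [integral_const_mul, hmean]
  · -- variance
    have hrw : (fun ω => (1 / (N : ℝ)) * ∑ i, H i j * ((∑ k, H i k * w k) + n i ω + μ))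
        = fun ω => w j + ∑ i, X i ω := funext hfun
    rw [hrw, variance_const_add' _ _ hintS]
    have hSum : (fun ω => ∑ i, X i ω) = ∑ i, X i := by
      ext ω; simp
    rw [hSum]
    have hmemX : ∀ i ∈ Finset.univ, MemLp (X i) 2 ℙ :=
      fun i _ => (hmem i).const_mul _
    have hpair : Set.Pairwise ↑(Finset.univ : Finset (Fin N))
        fun a b => IndepFun (X a) (X b) ℙ := by
      intro a _ b _ hab
      exact (hindep.indepFun hab).comp (measurable_const_mul _) (measurable_const_mul _)
    rw [IndepFun.variance_sum hmemX hpair]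
    have hterm : ∀ i : Fin N, variance (X i) ℙ = σuc ^ 2 / (N : ℝ) ^ 2 := by
      intro i
      rw [hX]
      rw [variance_const_mul, hvar]
      have h1 : (H i j) ^ 2 = 1 := by rcases hpm i j with h | h <;> simp [h]
      rw [div_pow, h1]
      ring
    rw [Finset.sum_congr rfl fun i _ => hterm i]
    rw [Finset.sum_const, Finset.card_univ, Fintype.card_fin, nsmul_eq_mul]
    field_simp
end
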